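/- If N is holomorphic and injective on a neighborhood V of a point a ∈ ℂ, and γ̂ : [0,T) → ℂ is an extension curve (N(γ̂(t+1)) = γ̂(t)) with a sequence t_n ↗ T such that γ̂(t_n) → a, then the extension can be continued strictly beyond T (T is not maximal). -/

import Mathlib

open Set Filter

private lemma exists_continuous_inverse (N : ℂ → ℂ) (K : Set ℂ) (hK : IsCompact K)
    (hNc : ContinuousOn N K) (hinjK : Set.InjOn N K) :
    ∃ g : ℂ → ℂ, ContinuousOn g (N '' K) ∧ (∀ z ∈ K, g (N z) = z) ∧
      ∀ w ∈ N '' K, N (g w) = w := by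
  haveI : CompactSpace K := isCompact_iff_compactSpace.mp hK
  set f : K → (N '' K) := fun z => ⟨N z, Set.mem_image_of_mem N z.2⟩ with hf
  have hfc : Continuous f := Continuous.subtype_mk hNc.restrict _
  have hfbij : Function.Bijective f := by
    constructor
    · intro x y hxy
      exact Subtype.ext (hinjK x.2 y.2 (congrArg Subtype.val hxy))
    · rintro ⟨w, z, hz, rfl⟩
      exact ⟨⟨z, hz⟩, rfl⟩
  let e : K ≃ (N '' K) := Equiv.ofBijective f hfbij
  have hec : Continuous e := hfc
  let h : K ≃ₜ (N '' K) := Continuous.homeoOfEquivCompactToT2 (f := e) hec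
  classical
  refine ⟨fun w => if hw : w ∈ N '' K then (h.symm ⟨w, hw⟩ : ℂ) else 0, ?_, ?_, ?_⟩
  · rw [continuousOn_iff_continuous_restrict]
    have hcs : Continuous fun w : N '' K => (h.symm w : ℂ) :=
      continuous_subtype_val.comp h.symm.continuous
    apply hcs.congr
    intro w
    simp only [Set.restrict_apply, dif_pos w.2]
  · intro z hz
    show (if hw : N z ∈ N '' K then (h.symm ⟨N z, hw⟩ : ℂ) else 0) = z
    rw [dif_pos (Set.mem_image_of_mem N hz)]
    have hz' : h ⟨z, hz⟩ = ⟨N z, Set.mem_image_of_mem N hz⟩ := rfl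
    rw [← hz', Homeomorph.symm_apply_apply]
  · intro w hw
    show N (if hw : w ∈ N '' K then (h.symm ⟨w, hw⟩ : ℂ) else 0) = w
    rw [dif_pos hw]
    exact congrArg Subtype.val (h.apply_symm_apply ⟨w, hw⟩)

/-- If `N` is holomorphic and injective on a neighborhood `V` of `a ∈ ℂ`, and
`γ̂ : [0,T) → ℂ` is an extension curve (`N (γ̂ (t+1)) = γ̂ t`) with a sequence
`t n ↗ T` such that `γ̂ (t n) → a`, then the extension continues strictly beyond
`T`: `T` is not maximal. -/
theorem extension_continues_beyond
    (N : ℂ → ℂ) (a : ℂ) (V : Set ℂ) (hV : V ∈ nhds a)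
    (hNa : AnalyticAt ℂ N a) (hinj : InjOn N V)
    (T : ℝ) (hT : 1 < T)
    (γh : ℝ → ℂ) (hcont : ContinuousOn γh (Ico 0 T))
    (hrel : ∀ t : ℝ, 0 ≤ t → t + 1 < T → N (γh (t + 1)) = γh t)
    (tseq : ℕ → ℝ) (htmono : StrictMono tseq) (htmem : ∀ n, tseq n ∈ Ico (0:ℝ) T)
    (htlim : Tendsto tseq atTop (nhds T))
    (hγlim : Tendsto (fun n => γh (tseq n)) atTop (nhds a)) :
    ∃ T' : ℝ, T < T' ∧ ∃ γh' : ℝ → ℂ, ContinuousOn γh' (Ico 0 T') ∧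
      (∀ t ∈ Ico (0:ℝ) T, γh' t = γh t) ∧
      (∀ t : ℝ, 0 ≤ t → t + 1 < T' → N (γh' (t + 1)) = γh' t) := by
  classical
  -- choose a small closed ball inside V on which N is analytic
  have hA : {z | AnalyticAt ℂ N z} ∈ nhds a := hNa.eventually_analyticAt
  obtain ⟨ε₀, hε₀, hball⟩ := Metric.mem_nhds_iff.mp (inter_mem hV hA)
  set r : ℝ := ε₀ / 2 with hrdef
  have hr0 : 0 < r := by positivity
  have hrsub : Metric.closedBall a r ⊆ Metric.ball a ε₀ := by
    apply Metric.closedBall_subset_ball; rw [hrdef]; linarith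
  have hrV : Metric.closedBall a r ⊆ V := fun z hz => (hball (hrsub hz)).1
  have hrA : ∀ z ∈ Metric.closedBall a r, AnalyticAt ℂ N z := fun z hz => (hball (hrsub hz)).2
  set K : Set ℂ := Metric.closedBall a r with hKdef
  have hKc : IsCompact K := isCompact_closedBall a r
  have hNc : ContinuousOn N K := fun z hz => ((hrA z hz).continuousAt).continuousWithinAt
  have hinjK : InjOn N K := hinj.mono hrV
  have hballK : Metric.ball a r ⊆ K := Metric.ball_subset_closedBall
  -- open mapping theorem: N '' (ball a r) is a neighborhood of N a
  have hop : nhds (N a) ≤ Filter.map N (nhds a) := by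
    rcases hNa.eventually_constant_or_nhds_le_map_nhds with h | h
    · exfalso
      have hVe : ∀ᶠ z in nhds a, z ∈ V := hV
      have h4 : ∀ᶠ z in nhdsWithin a {a}ᶜ, (N z = N a ∧ z ∈ V) ∧ z ∈ ({a}ᶜ : Set ℂ) :=
        ((h.and hVe).filter_mono nhdsWithin_le_nhds).and self_mem_nhdsWithin
      obtain ⟨z, hz, hzne⟩ := h4.exists
      exact hzne (mem_singleton_iff.mpr (hinj hz.2 (mem_of_mem_nhds hV) hz.1))
    · exact h
  have hW : N '' Metric.ball a r ∈ nhds (N a) := hop (image_mem_map (Metric.ball_mem_nhds a hr0))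
  -- γh (T-1) = N a
  have hT1mem : (T - 1) ∈ Ico (0:ℝ) T := ⟨by linarith, by linarith⟩
  have hc1 : ContinuousWithinAt γh (Ico 0 T) (T - 1) := hcont _ hT1mem
  have hts : Tendsto (fun n => tseq n - 1) atTop (nhdsWithin (T - 1) (Ico 0 T)) := by
    apply tendsto_nhdsWithin_of_tendsto_nhds_of_eventually_within
    · exact htlim.sub_const 1
    · filter_upwards [htlim.eventually (eventually_gt_nhds hT)] with n hn
      exact ⟨by linarith, by linarith [(htmem n).2]⟩
  have h1 : Tendsto (fun n => γh (tseq n - 1)) atTop (nhds (γh (T - 1))) :=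
    hc1.tendsto.comp hts
  have h2 : Tendsto (fun n => γh (tseq n - 1)) atTop (nhds (N a)) := by
    have h3 : Tendsto (fun n => N (γh (tseq n))) atTop (nhds (N a)) :=
      hNa.continuousAt.tendsto.comp hγlim
    refine Tendsto.congr' ?_ h3
    filter_upwards [htlim.eventually (eventually_gt_nhds hT)] with n hn
    have hx : tseq n - 1 + 1 = tseq n := by ring
    have := hrel (tseq n - 1) (by linarith) (by rw [hx]; exact (htmem n).2)
    rw [hx] at this
    exact this
  have hb1 : γh (T - 1) = N a := tendsto_nhds_unique h1 h2
  -- choose δ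
  have hpre : γh ⁻¹' (N '' Metric.ball a r) ∈ nhdsWithin (T - 1) (Ico 0 T) :=
    hc1 (by rw [hb1]; exact hW)
  obtain ⟨ε, hε0, hεsub⟩ := Metric.mem_nhdsWithin_iff.mp hpre
  set δ : ℝ := min (ε / 3) (min ((T - 1) / 2) (1 / 3)) with hδdef
  have hδ0 : 0 < δ := by
    apply lt_min (by linarith) (lt_min (by linarith) (by norm_num))
  have hδε : δ < ε := lt_of_le_of_lt (min_le_left _ _) (by linarith)
  have hδT : δ ≤ (T - 1) / 2 := le_trans (min_le_right _ _) (min_le_left _ _)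
  have hδ3 : δ ≤ 1 / 3 := le_trans (min_le_right _ _) (min_le_right _ _)
  -- values of γh near T-1 are in N '' ball a r
  have key0 : ∀ s : ℝ, T - 1 - δ ≤ s → s < T - 1 + δ → γh s ∈ N '' Metric.ball a r := by
    intro s hs1 hs2
    apply hεsub
    refine ⟨?_, ⟨by linarith, by linarith⟩⟩
    rw [Metric.mem_ball, Real.dist_eq, abs_lt]
    constructor <;> linarith
  -- the confinement: γh t ∈ ball a r for t ∈ [T - δ, T)
  obtain ⟨O₁, hO₁o, hO₁⟩ := continuousOn_iff'.mp hcont (Metric.ball a r) Metric.isOpen_ball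
  obtain ⟨O₂, hO₂o, hO₂⟩ := continuousOn_iff'.mp hcont (Metric.closedBall a r)ᶜ
    Metric.isClosed_closedBall.isOpen_compl
  have hIsubIco : Ico (T - δ) T ⊆ Ico (0:ℝ) T := fun t ht => ⟨by linarith [ht.1], ht.2⟩
  have hdich : ∀ t ∈ Ico (T - δ) T, γh t ∈ Metric.ball a r ∨ γh t ∈ (Metric.closedBall a r)ᶜ := by
    rintro t ⟨ht1, ht2⟩
    by_cases h : γh t ∈ Metric.closedBall a r
    · left
      have hx : t - 1 + 1 = t := by ring
      have hrel' := hrel (t - 1) (by linarith) (by rw [hx]; exact ht2)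
      rw [hx] at hrel'
      have hmem : γh (t - 1) ∈ N '' Metric.ball a r := key0 (t - 1) (by linarith) (by linarith)
      rw [← hrel'] at hmem
      obtain ⟨z, hz, hzeq⟩ := hmem
      have : z = γh t := hinj (hrV (hballK hz)) (hrV h) hzeq
      rwa [← this]
    · right; exact h
  have hcover : Ico (T - δ) T ⊆ O₁ ∪ O₂ := by
    intro t ht
    rcases hdich t ht with h | h
    · left
      have : t ∈ γh ⁻¹' Metric.ball a r ∩ Ico 0 T := ⟨h, hIsubIco ht⟩
      rw [hO₁] at this
      exact this.1
    · right
      have : t ∈ γh ⁻¹' (Metric.closedBall a r)ᶜ ∩ Ico 0 T := ⟨h, hIsubIco ht⟩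
      rw [hO₂] at this
      exact this.1
  have hne1 : (Ico (T - δ) T ∩ O₁).Nonempty := by
    have hev : ∀ᶠ n in atTop, T - δ < tseq n ∧ γh (tseq n) ∈ Metric.ball a r :=
      (htlim.eventually (eventually_gt_nhds (by linarith : T - δ < T))).and
        (hγlim.eventually (Metric.isOpen_ball.eventually_mem (Metric.mem_ball_self hr0)))
    obtain ⟨n, hn1, hn2⟩ := hev.exists
    refine ⟨tseq n, ⟨le_of_lt hn1, (htmem n).2⟩, ?_⟩
    have : tseq n ∈ γh ⁻¹' Metric.ball a r ∩ Ico 0 T := ⟨hn2, htmem n⟩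
    rw [hO₁] at this
    exact this.1
  have key1 : ∀ t : ℝ, T - δ ≤ t → t < T → γh t ∈ Metric.ball a r := by
    have hIO₁ : Ico (T - δ) T ⊆ O₁ := by
      by_contra hns
      rw [not_subset] at hns
      obtain ⟨t₀, ht₀I, ht₀O⟩ := hns
      have hne2 : (Ico (T - δ) T ∩ O₂).Nonempty :=
        ⟨t₀, ht₀I, (hcover ht₀I).resolve_left ht₀O⟩
      obtain ⟨t₁, ht₁I, ht₁O₁, ht₁O₂⟩ :=
        isPreconnected_Ico O₁ O₂ hO₁o hO₂o hcover hne1 hne2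
      have hm1 : t₁ ∈ γh ⁻¹' Metric.ball a r ∩ Ico 0 T := by
        rw [hO₁]; exact ⟨ht₁O₁, hIsubIco ht₁I⟩
      have hm2 : t₁ ∈ γh ⁻¹' (Metric.closedBall a r)ᶜ ∩ Ico 0 T := by
        rw [hO₂]; exact ⟨ht₁O₂, hIsubIco ht₁I⟩
      exact hm2.1 (Metric.ball_subset_closedBall hm1.1)
    intro t ht1 ht2
    have : t ∈ γh ⁻¹' Metric.ball a r ∩ Ico 0 T := by
      rw [hO₁]; exact ⟨hIO₁ ⟨ht1, ht2⟩, hIsubIco ⟨ht1, ht2⟩⟩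
    exact this.1
  -- the continuous local inverse
  obtain ⟨g, hgc, hgl, hgr⟩ := exists_continuous_inverse N K hKc hNc hinjK
  have hWK : N '' Metric.ball a r ⊆ N '' K := image_mono (f := N) hballK
  -- the extension
  refine ⟨T + δ, by linarith, fun t => if t < T - δ then γh t else g (γh (t - 1)), ?_, ?_, ?_⟩
  · -- continuity
    have hagree : ∀ t ∈ Ico (0:ℝ) T,
        (if t < T - δ then γh t else g (γh (t - 1))) = γh t := by
      rintro t ⟨ht0, htT⟩
      by_cases h : t < T - δ
      · rw [if_pos h]
      · rw [if_neg h]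
        push_neg at h
        have hx : t - 1 + 1 = t := by ring
        have hrel' := hrel (t - 1) (by linarith) (by rw [hx]; exact htT)
        rw [hx] at hrel'
        rw [← hrel']
        exact hgl _ (hballK (key1 t h htT))
    have hcA : ContinuousOn (fun t => if t < T - δ then γh t else g (γh (t - 1)))
        (Ico 0 T) := hcont.congr hagree
    have hcB : ContinuousOn (fun t => if t < T - δ then γh t else g (γh (t - 1)))
        (Ico 0 (T + δ) ∩ Ioi (T - δ)) := by
      have hcomp : ContinuousOn (fun t : ℝ => g (γh (t - 1)))
          (Ico 0 (T + δ) ∩ Ioi (T - δ)) := by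
        apply hgc.comp
        · apply hcont.comp ((continuous_sub_right (1:ℝ)).continuousOn)
          rintro t ⟨⟨ht0, ht1⟩, ht2⟩
          simp only [mem_Ioi] at ht2
          beta_reduce
          exact ⟨by linarith, by linarith⟩
        · rintro t ⟨⟨ht0, ht1⟩, ht2⟩
          simp only [mem_Ioi] at ht2
          exact hWK (key0 (t - 1) (by linarith) (by linarith))
      apply hcomp.congr
      rintro t ⟨⟨ht0, ht1⟩, ht2⟩
      simp only [mem_Ioi] at ht2
      beta_reduce
      rw [if_neg (by linarith)]
    intro x hx
    rcases lt_or_ge x T with hxT | hxT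
    · refine ContinuousWithinAt.mono_of_mem_nhdsWithin (hcA x ⟨hx.1, hxT⟩) ?_
      refine mem_of_superset (inter_mem_nhdsWithin _ (Iio_mem_nhds hxT)) ?_
      rintro t ⟨ht1, ht2⟩
      exact ⟨ht1.1, ht2⟩
    · refine ContinuousWithinAt.mono_of_mem_nhdsWithin (hcB x ⟨hx, by simp only [mem_Ioi]; linarith⟩) ?_
      exact inter_mem_nhdsWithin _ (Ioi_mem_nhds (by linarith))
  · -- agreement on [0, T)
    rintro t ⟨ht0, htT⟩
    beta_reduce
    by_cases h : t < T - δ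
    · rw [if_pos h]
    · rw [if_neg h]
      push_neg at h
      have hx : t - 1 + 1 = t := by ring
      have hrel' := hrel (t - 1) (by linarith) (by rw [hx]; exact htT)
      rw [hx] at hrel'
      rw [← hrel']
      exact hgl _ (hballK (key1 t h htT))
  · -- functional equation
    intro t ht0 htT'
    beta_reduce
    by_cases h : t + 1 < T - δ
    · rw [if_pos h, if_pos (by linarith)]
      exact hrel t ht0 (by linarith)
    · push_neg at h
      rw [if_neg (not_lt.mpr h), if_pos (by linarith)]
      have hx : t + 1 - 1 = t := by ring
      rw [hx]
      exact hgr _ (hWK (key0 t (by linarith) (by linarith)))
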